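/- arXiv:2202.08544 — 6 statements merged into one kernel-verified Lean document; each statement's English description precedes it below -/
import Mathlib

section
/- Let Π = (Δ, Σ, 𝒱, ℰ) be an LCL problem for Δ-regular unrooted trees and let 𝒮 ⊆ 𝒱 be a set of node configurations with trim(𝒮) ≠ ∅. Then for every node configuration C ∈ trim(𝒮) and every label σ occurring in the multiset C, there exist a node configuration C′ ∈ trim(𝒮) and a label σ′ occurring in C′ such that the size-2 multiset {σ, σ′} lies in ℰ. -/
/-- `lclCompat 𝒮 ℰ i τ` : there is a correct half-edge labeling of a copy of the
rooted tree `T_i` hanging below an edge whose half-edge on the `T_i` side is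
labeled `τ`, such that the node configuration of every degree-`Δ` node of this
subtree lies in `𝒮` and every edge configuration lies in `ℰ`. -/
def lclCompat {L : Type} [DecidableEq L] (S E : Set (Multiset L)) : ℕ → L → Prop
  | 0, _ => True
  | i + 1, τ => ∃ C ∈ S, τ ∈ C ∧
      ∀ β ∈ C.erase τ, ∃ τ', ({β, τ'} : Multiset L) ∈ E ∧ lclCompat S E i τ'

/-- For `i ≥ 1`: there exists a correct half-edge labeling of `T_i*` in which the
node configuration of the root is `C` and the node configuration of every other
degree-`Δ` node lies in `𝒮` (edge configurations lie in `ℰ`). -/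
def lclTreeOk {L : Type} [DecidableEq L] (S E : Set (Multiset L)) (i : ℕ)
    (C : Multiset L) : Prop :=
  ∀ β ∈ C, ∃ τ, ({β, τ} : Multiset L) ∈ E ∧ lclCompat S E (i - 1) τ

/-- `trim 𝒮`: configurations `C ∈ 𝒮` such that for every `i ≥ 1` there is a correct
half-edge labeling of `T_i*` with root configuration `C` and all other degree-`Δ`
node configurations in `𝒮`. -/
def lclTrim {L : Type} [DecidableEq L] (S E : Set (Multiset L)) : Set (Multiset L) :=
  {C | C ∈ S ∧ ∀ i : ℕ, 1 ≤ i → lclTreeOk S E i C}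

theorem lclCompat_succ_le {L : Type} [DecidableEq L] (S E : Set (Multiset L)) :
    ∀ i : ℕ, ∀ τ : L, lclCompat S E (i + 1) τ → lclCompat S E i τ := by
  intro i
  induction i with
  | zero => intro τ _; trivial
  | succ n ih =>
    rintro τ ⟨C, hCS, hτC, h⟩
    refine ⟨C, hCS, hτC, fun β hβ => ?_⟩
    obtain ⟨τ', hE, hc⟩ := h β hβ
    exact ⟨τ', hE, ih τ' hc⟩

theorem lclCompat_mono {L : Type} [DecidableEq L] (S E : Set (Multiset L))
    {i j : ℕ} (hij : i ≤ j) {τ : L} (h : lclCompat S E j τ) : lclCompat S E i τ := by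
  induction j with
  | zero => exact (Nat.le_zero.mp hij) ▸ h
  | succ n ih =>
    rcases Nat.lt_or_ge i (n + 1) with hlt | hge
    · exact ih (by omega) (lclCompat_succ_le S E n τ h)
    · have : i = n + 1 := by omega
      exact this ▸ h

theorem lclCompat_of_trim {L : Type} [DecidableEq L] (S E : Set (Multiset L))
    {C : Multiset L} {σ : L} (hC : C ∈ lclTrim S E) (hσ : σ ∈ C) :
    ∀ n : ℕ, lclCompat S E n σ := by
  intro n
  cases n with
  | zero => trivial
  | succ m =>
    refine ⟨C, hC.1, hσ, fun β hβ => ?_⟩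
    obtain ⟨τ, hE, hc⟩ := hC.2 (m + 1) (by omega) β (Multiset.mem_of_mem_erase hβ)
    exact ⟨τ, hE, by simpa using hc⟩

/-- Property of trimming, unrooted trees. -/
theorem stmt0 {L : Type} [Fintype L] [DecidableEq L]
    (Δ : ℕ) (hΔ : 1 ≤ Δ) (V E : Set (Multiset L))
    (hV : ∀ C ∈ V, Multiset.card C = Δ)
    (hE : ∀ D ∈ E, Multiset.card D = 2)
    (S : Set (Multiset L)) (hS : S ⊆ V)
    (hne : (lclTrim S E).Nonempty) :
    ∀ C ∈ lclTrim S E, ∀ σ ∈ C,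
      ∃ C' ∈ lclTrim S E, ∃ σ' ∈ C', ({σ, σ'} : Multiset L) ∈ E := by
  intro C hC σ hσ
  -- Step 1: for each n, a τ with {σ,τ} ∈ E and compat n τ
  have h1 : ∀ n : ℕ, ∃ τ, ({σ, τ} : Multiset L) ∈ E ∧ lclCompat S E n τ := by
    intro n
    obtain ⟨τ, hτE, hτc⟩ := hC.2 (n + 1) (by omega) σ hσ
    exact ⟨τ, hτE, by simpa using hτc⟩
  choose f hf1 hf2 using h1
  -- Step 2: pigeonhole to get a single τ working for all n
  obtain ⟨τ, hτinf⟩ := Finite.exists_infinite_fiber f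
  have hτinf' : (f ⁻¹' {τ}).Infinite := Set.infinite_coe_iff.mp hτinf
  have hτE : ({σ, τ} : Multiset L) ∈ E := by
    obtain ⟨m, hm, _⟩ := hτinf'.exists_gt 0
    simp only [Set.mem_preimage, Set.mem_singleton_iff] at hm
    simpa [hm] using hf1 m
  have hτc : ∀ n : ℕ, lclCompat S E n τ := by
    intro n
    obtain ⟨m, hm, hnm⟩ := hτinf'.exists_gt n
    simp only [Set.mem_preimage, Set.mem_singleton_iff] at hm
    have : lclCompat S E m τ := hm ▸ hf2 m
    exact lclCompat_mono S E (le_of_lt hnm) this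
  -- Step 3: for each n, unfold compat (n+1) τ
  have h3 : ∀ n : ℕ, ∃ D ∈ S, τ ∈ D ∧
      ∀ β ∈ D.erase τ, ∃ τ', ({β, τ'} : Multiset L) ∈ E ∧ lclCompat S E n τ' :=
    fun n => hτc (n + 1)
  choose g hg1 hg2 hg3 using h3
  -- Step 4: pigeonhole over Sym L Δ
  let g' : ℕ → Sym L Δ := fun n => ⟨g n, hV _ (hS (hg1 n))⟩
  obtain ⟨y, hyinf⟩ := Finite.exists_infinite_fiber g'
  have hyinf' : (g' ⁻¹' {y}).Infinite := Set.infinite_coe_iff.mp hyinf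
  set C' : Multiset L := (y : Multiset L) with hC'def
  have hmem : ∀ n, ∀ m ∈ g' ⁻¹' {y}, n ≤ m → g m = C' ∧
      (∀ β ∈ C'.erase τ, ∃ τ', ({β, τ'} : Multiset L) ∈ E ∧ lclCompat S E n τ') := by
    intro n m hm hnm
    simp only [Set.mem_preimage, Set.mem_singleton_iff] at hm
    have hgm : g m = C' := by
      have := congrArg (Sym.toMultiset) hm
      simpa [g'] using this
    refine ⟨hgm, fun β hβ => ?_⟩
    obtain ⟨τ', hτ'E, hτ'c⟩ := hg3 m β (hgm ▸ hβ)
    exact ⟨τ', hτ'E, lclCompat_mono S E hnm hτ'c⟩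
  obtain ⟨m0, hm0, hm0'⟩ := hyinf'.exists_gt 0
  have hC'S : C' ∈ S := ((hmem 0 m0 hm0 (by omega)).1) ▸ hg1 m0
  have hτC' : τ ∈ C' := ((hmem 0 m0 hm0 (by omega)).1) ▸ hg2 m0
  -- Step 5: C' ∈ trim
  have hσc : ∀ n, lclCompat S E n σ := lclCompat_of_trim S E hC hσ
  refine ⟨C', ⟨hC'S, fun i hi β hβ => ?_⟩, τ, hτC', hτE⟩
  by_cases hβτ : β = τ
  · subst hβτ
    exact ⟨σ, by rwa [Multiset.pair_comm], hσc _⟩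
  · obtain ⟨m, hm, hnm⟩ := hyinf'.exists_gt (i - 1)
    obtain ⟨_, h⟩ := hmem (i - 1) m hm (le_of_lt hnm)
    exact h β ((Multiset.mem_erase_of_ne hβτ).mpr hβ)
end

section
/- Let Π = (Δ, Σ, 𝒱, ℰ) be an LCL problem for Δ-regular unrooted trees. If trim(𝒱) = ∅, then there exists an integer i ≥ 1 such that the tree T_i* admits no correct half-edge labeling at all; in particular, there exists a tree of maximum degree at most Δ on which Π has no correct solution. -/
lemma lclCompat_anti {L : Type} [DecidableEq L] (S E : Set (Multiset L)) :
    ∀ i τ, lclCompat S E (i + 1) τ → lclCompat S E i τ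
  | 0, _, _ => trivial
  | (i + 1), τ, h => by
    obtain ⟨C, hC, hτ, hβ⟩ := h
    refine ⟨C, hC, hτ, fun β hβ' => ?_⟩
    obtain ⟨τ', hτ'E, hc⟩ := hβ β hβ'
    exact ⟨τ', hτ'E, lclCompat_anti S E i τ' hc⟩

lemma lclCompat_le {L : Type} [DecidableEq L] (S E : Set (Multiset L)) :
    ∀ i j τ, j ≤ i → lclCompat S E i τ → lclCompat S E j τ := by
  intro i
  induction i with
  | zero => intro j τ hj hc; simp_all
  | succ i ih =>
    intro j τ hj hc
    rcases Nat.eq_or_lt_of_le hj with rfl | hlt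
    · exact hc
    · exact ih j τ (Nat.lt_succ_iff.mp hlt) (lclCompat_anti S E i τ hc)

lemma lclTreeOk_le {L : Type} [DecidableEq L] (S E : Set (Multiset L))
    {i j : ℕ} {C : Multiset L} (hj : j ≤ i) (h : lclTreeOk S E i C) :
    lclTreeOk S E j C := by
  intro β hβ
  obtain ⟨τ, hτE, hc⟩ := h β hβ
  exact ⟨τ, hτE, lclCompat_le S E (i - 1) (j - 1) τ (Nat.sub_le_sub_right hj 1) hc⟩

/-- Unsolvability when `trim(𝒱) = ∅`: some `T_i*` admits no correct
half-edge labeling at all; in particular there is a tree of maximum degree at most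
`Δ` on which `Π` has no correct solution. -/
theorem stmt3 {L : Type} [Fintype L] [DecidableEq L]
    (Δ : ℕ) (hΔ : 1 ≤ Δ) (V E : Set (Multiset L))
    (hV : ∀ C ∈ V, Multiset.card C = Δ)
    (hE : ∀ D ∈ E, Multiset.card D = 2)
    (h : lclTrim V E = ∅) :
    ∃ i : ℕ, 1 ≤ i ∧ ¬ ∃ C ∈ V, lclTreeOk V E i C := by
  by_contra hcon
  push_neg at hcon
  choose g hgV hgOk using fun n : ℕ => hcon (n + 1) (Nat.le_add_left 1 n)
  have hcard : ∀ n, Multiset.card (g n) = Δ := fun n => hV _ (hgV n)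
  let f : ℕ → Sym L Δ := fun n => ⟨g n, hcard n⟩
  obtain ⟨b, hb⟩ := Finite.exists_infinite_fiber f
  replace hb : (f ⁻¹' {b}).Infinite := Set.infinite_coe_iff.mp hb
  obtain ⟨n0, hn0⟩ := hb.nonempty
  have hCV : (b : Multiset L) ∈ V := by
    have : f n0 = b := hn0
    rw [← this]; exact hgV n0
  have hCok : ∀ i : ℕ, 1 ≤ i → lclTreeOk V E i (b : Multiset L) := by
    intro i hi
    obtain ⟨n, hn, hni⟩ := hb.exists_gt i
    have hfn : f n = b := hn
    have := hgOk n
    rw [show (g n) = (b : Multiset L) from congrArg Subtype.val hfn] at this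
    exact lclTreeOk_le V E (le_of_lt (Nat.lt_succ_of_lt hni)) this
  have : (b : Multiset L) ∈ lclTrim V E := ⟨hCV, hCok⟩
  rw [h] at this
  exact this
end

section
/- Let Π = (Δ, Σ, 𝒱, ℰ) be an LCL problem for Δ-regular unrooted trees, let 𝒟 be a set of size-2 multisets over Σ, and suppose the size-2 multiset {a, b} ∈ 𝒟 is not path-flexible with respect to M_𝒟. Then at least one of the following holds: (1) for at least one choice of s ∈ {(a,b), (b,a)} and t ∈ {(a,b), (b,a)} there is no walk of positive length from s to t in M_𝒟; or (2) there exists an integer x with 2 ≤ x ≤ |Σ|² such that for every positive integer k that is not an integer multiple of x there is neither a walk of length k from (a,b) to (a,b) nor a walk of length k from (b,a) to (b,a) in M_𝒟. -/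
/-- `hasWalk E k u v`: there is a walk of length exactly `k` from `u` to `v` in the
directed graph with edge relation `E`. -/
def hasWalk {α : Type*} (E : α → α → Prop) : ℕ → α → α → Prop
  | 0, u, v => u = v
  | k + 1, u, v => ∃ w, E u w ∧ hasWalk E k w v

/-- Vertex set of the automaton `M_𝒟`: ordered pairs whose underlying size-2 multiset
lies in `𝒟`. -/
def mVert {L : Type} [DecidableEq L] (D : Set (Multiset L)) : Set (L × L) :=
  {p | ({p.1, p.2} : Multiset L) ∈ D}

/-- Edge relation of the automaton `M_𝒟` (w.r.t. the edge constraint `ℰ`):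
`(a,b) → (c,d)` whenever both are vertices and `{b,c} ∈ ℰ`. -/
def mEdge {L : Type} [DecidableEq L] (D E : Set (Multiset L)) (p q : L × L) : Prop :=
  p ∈ mVert D ∧ q ∈ mVert D ∧ ({p.2, q.1} : Multiset L) ∈ E

/-- The vertex `(a,b)` of `M_𝒟` (equivalently the multiset `{a,b} ∈ 𝒟`) is
path-flexible. -/
def flexPair {L : Type} [DecidableEq L] (D E : Set (Multiset L)) (a b : L) : Prop :=
  ∃ K : ℕ, ∀ k : ℕ, K ≤ k →
    hasWalk (mEdge D E) k (a, b) (a, b) ∧ hasWalk (mEdge D E) k (a, b) (b, a) ∧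
    hasWalk (mEdge D E) k (b, a) (a, b) ∧ hasWalk (mEdge D E) k (b, a) (b, a)

/-- The relation `∼` on `𝒟`: `{a,b} ∼ {c,d}` iff there is a walk (of length `≥ 0`)
from `s` to `t` in `M_𝒟` for every `s ∈ {(a,b),(b,a)}` and `t ∈ {(c,d),(d,c)}`. -/
def simPair {L : Type} [DecidableEq L] (D E : Set (Multiset L)) (a b c d : L) : Prop :=
  ∀ s ∈ ({(a, b), (b, a)} : Set (L × L)), ∀ t ∈ ({(c, d), (d, c)} : Set (L × L)),
    ∃ k : ℕ, hasWalk (mEdge D E) k s t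

lemma hasWalk_trans {α : Type*} {Ed : α → α → Prop} :
    ∀ {k l : ℕ} {u v w : α}, hasWalk Ed k u v → hasWalk Ed l v w →
      hasWalk Ed (k + l) u w := by
  intro k
  induction k with
  | zero =>
    intro l u v w h1 h2
    simp only [hasWalk] at h1
    subst h1
    simpa using h2
  | succ n ih =>
    intro l u v w h1 h2
    obtain ⟨x, hx, hw⟩ := h1
    rw [Nat.succ_add]
    exact ⟨x, hx, ih hw h2⟩

lemma hasWalk_to_fun {α : Type*} {Ed : α → α → Prop} :
    ∀ {k : ℕ} {u v : α}, hasWalk Ed k u v →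
      ∃ f : ℕ → α, f 0 = u ∧ f k = v ∧ ∀ i < k, Ed (f i) (f (i + 1)) := by
  intro k
  induction k with
  | zero =>
    intro u v h
    simp only [hasWalk] at h
    exact ⟨fun _ => u, rfl, by simp [h], by simp⟩
  | succ n ih =>
    intro u v h
    obtain ⟨w, hw, hwalk⟩ := h
    obtain ⟨f, hf0, hfn, hfe⟩ := ih hwalk
    refine ⟨fun m => if m = 0 then u else f (m - 1), by simp, by simp [hfn], ?_⟩
    intro i hi
    cases i with
    | zero => simpa [hf0] using hw
    | succ j => simpa using hfe j (by omega)

lemma hasWalk_of_fun {α : Type*} {Ed : α → α → Prop} (f : ℕ → α) :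
    ∀ (n i : ℕ), (∀ t, i ≤ t → t < i + n → Ed (f t) (f (t + 1))) →
      hasWalk Ed n (f i) (f (i + n)) := by
  intro n
  induction n with
  | zero => intro i _; simp [hasWalk]
  | succ m ih =>
    intro i h
    refine ⟨f (i + 1), h i le_rfl (by omega), ?_⟩
    have := ih (i + 1) (fun t ht ht' => h t (by omega) (by omega))
    have e : i + 1 + m = i + (m + 1) := by omega
    rwa [e] at this

lemma short_closed {α : Type*} [Fintype α] {Ed : α → α → Prop} {u : α} :
    ∀ k, 0 < k → hasWalk Ed k u u →
      ∃ m, 0 < m ∧ m ≤ Fintype.card α ∧ hasWalk Ed m u u := by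
  intro k
  induction k using Nat.strong_induction_on with
  | _ k ih =>
    intro hk hw
    by_cases hle : k ≤ Fintype.card α
    · exact ⟨k, hk, hle, hw⟩
    · push_neg at hle
      obtain ⟨f, hf0, hfk, hfe⟩ := hasWalk_to_fun hw
      have hcard : Fintype.card α < Fintype.card (Fin k) := by simpa using hle
      obtain ⟨i, j, hij, hfij⟩ :=
        Fintype.exists_ne_map_eq_of_card_lt (fun i : Fin k => f i) hcard
      have key : ∀ i j : Fin k, (i : ℕ) < (j : ℕ) → f i = f j →
          ∃ m, 0 < m ∧ m ≤ Fintype.card α ∧ hasWalk Ed m u u := by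
        intro i j hlt hfeq
        have hik : (i : ℕ) < k := i.isLt
        have hjk : (j : ℕ) < k := j.isLt
        have w1 : hasWalk Ed i u (f i) := by
          have := hasWalk_of_fun f i 0 (fun t ht ht' => hfe t (by omega))
          simpa [hf0] using this
        have w2 : hasWalk Ed (k - j) (f (j : ℕ)) u := by
          have := hasWalk_of_fun f (k - j) j (fun t ht ht' => hfe t (by omega))
          have e : (j : ℕ) + (k - j) = k := by omega
          rw [e, hfk] at this
          exact this
        have w3 : hasWalk Ed ((i : ℕ) + (k - j)) u u := hasWalk_trans w1 (hfeq ▸ w2)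
        exact ih ((i : ℕ) + (k - j)) (by omega) (by omega) w3
      rcases lt_or_gt_of_ne hij with h | h
      · exact key i j (Fin.lt_def.mp h) hfij
      · exact key j i (Fin.lt_def.mp h) hfij.symm

/-- Property of path-inflexibility, unrooted trees. -/
theorem stmt4 {L : Type} [Fintype L] [DecidableEq L]
    (Δ : ℕ) (hΔ : 1 ≤ Δ) (V E : Set (Multiset L))
    (hV : ∀ C ∈ V, Multiset.card C = Δ)
    (hE : ∀ D' ∈ E, Multiset.card D' = 2)
    (D : Set (Multiset L)) (hD : ∀ D' ∈ D, Multiset.card D' = 2)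
    (a b : L) (hab : ({a, b} : Multiset L) ∈ D)
    (hflex : ¬ flexPair D E a b) :
    (∃ s ∈ ({(a, b), (b, a)} : Set (L × L)), ∃ t ∈ ({(a, b), (b, a)} : Set (L × L)),
      ¬ ∃ k : ℕ, 0 < k ∧ hasWalk (mEdge D E) k s t) ∨
    (∃ x : ℕ, 2 ≤ x ∧ x ≤ Fintype.card L ^ 2 ∧
      ∀ k : ℕ, 0 < k → ¬ x ∣ k →
        ¬ hasWalk (mEdge D E) k (a, b) (a, b) ∧ ¬ hasWalk (mEdge D E) k (b, a) (b, a)) := by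
  by_cases h1 : (∃ s ∈ ({(a, b), (b, a)} : Set (L × L)),
      ∃ t ∈ ({(a, b), (b, a)} : Set (L × L)),
      ¬ ∃ k : ℕ, 0 < k ∧ hasWalk (mEdge D E) k s t)
  · exact Or.inl h1
  right
  push_neg at h1
  obtain ⟨p, hp0, hpw⟩ := h1 (a, b) (by simp) (b, a) (by simp)
  obtain ⟨q, hq0, hqw⟩ := h1 (b, a) (by simp) (a, b) (by simp)
  obtain ⟨r, hr0, hrw⟩ := h1 (a, b) (by simp) (a, b) (by simp)
  set A : Set ℕ := {k | hasWalk (mEdge D E) k (a, b) (a, b)} with hAdef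
  have hA0 : (0 : ℕ) ∈ A := rfl
  have hAadd : ∀ {x y : ℕ}, x ∈ A → y ∈ A → x + y ∈ A :=
    fun hx hy => hasWalk_trans hx hy
  have hAmul : ∀ (t : ℕ) {x : ℕ}, x ∈ A → t * x ∈ A := by
    intro t
    induction t with
    | zero => intro x hx; simpa using hA0
    | succ n ih =>
      intro x hx
      have := hAadd (ih hx) hx
      rwa [show n * x + x = (n + 1) * x by ring] at this
  set S : Set ℕ := {n | 0 < n ∧ ∃ u ∈ A, ∃ v ∈ A, u = v + n} with hSdef
  have hSne : r ∈ S := ⟨hr0, r, hrw, 0, hA0, by omega⟩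
  set g := sInf S with hgdef
  have hgS : g ∈ S := Nat.sInf_mem ⟨r, hSne⟩
  obtain ⟨hg0, u0, hu0, v0, hv0, huv⟩ := hgS
  have hgdvd : ∀ k ∈ A, g ∣ k := by
    intro k hk
    by_contra hnd
    have hrS : k % g ∈ S := by
      refine ⟨Nat.pos_of_ne_zero fun h => hnd (Nat.dvd_of_mod_eq_zero h),
        k + (k / g) * v0, hAadd hk (hAmul _ hv0), (k / g) * u0, hAmul _ hu0, ?_⟩
      subst huv
      have hdm : g * (k / g) + k % g = k := Nat.div_add_mod k g
      have hx : k / g * (v0 + g) = k / g * v0 + g * (k / g) := by ring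
      linarith [hdm, hx]
    have hle := Nat.sInf_le hrS
    have hlt : k % g < g := Nat.mod_lt _ hg0
    omega
  have hpq : p + q ∈ A := hasWalk_trans hpw hqw
  have hB : ∀ k : ℕ, hasWalk (mEdge D E) k (b, a) (b, a) → p + (k + q) ∈ A :=
    fun k hk => hasWalk_trans hpw (hasWalk_trans hk hqw)
  rcases Nat.lt_or_ge g 2 with hglt | hge
  · -- g = 1 : derive flexibility, contradiction
    exfalso
    apply hflex
    have hg1 : g = 1 := by omega
    have hcons : ∃ v : ℕ, 0 < v ∧ v ∈ A ∧ v + 1 ∈ A := by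
      rcases Nat.eq_zero_or_pos v0 with h0 | h0
      · refine ⟨1, one_pos, ?_, ?_⟩
        · rwa [show (1 : ℕ) = u0 by omega]
        · have := hAadd hu0 hu0
          rwa [show u0 + u0 = 1 + 1 by omega] at this
      · exact ⟨v0, h0, hv0, by rwa [show v0 + 1 = u0 by omega]⟩
    obtain ⟨v, hvpos, hvA, hv1A⟩ := hcons
    have hlarge : ∀ n : ℕ, v * v ≤ n → n ∈ A := by
      intro n hn
      have hrlt : n % v < v := Nat.mod_lt _ hvpos
      have hqge : v ≤ n / v := (Nat.le_div_iff_mul_le hvpos).mpr hn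
      have hle : n % v ≤ n / v := le_trans (le_of_lt hrlt) hqge
      obtain ⟨c, hc⟩ := Nat.le.dest hle
      have hmem := hAadd (hAmul c hvA) (hAmul (n % v) hv1A)
      have heq2 : c * v + n % v * (v + 1) = v * (n % v + c) + n % v := by ring
      rw [hc, Nat.div_add_mod] at heq2
      rwa [heq2] at hmem
    refine ⟨v * v + p + q, fun k hk => ?_⟩
    have h1w : hasWalk (mEdge D E) k (a, b) (a, b) := hlarge k (by omega)
    have h2w : hasWalk (mEdge D E) k (a, b) (b, a) := by
      have := hasWalk_trans (hlarge (k - p) (by omega)) hpw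
      rwa [show k - p + p = k by omega] at this
    have h3w : hasWalk (mEdge D E) k (b, a) (a, b) := by
      have := hasWalk_trans hqw (hlarge (k - q) (by omega))
      rwa [show q + (k - q) = k by omega] at this
    have h4w : hasWalk (mEdge D E) k (b, a) (b, a) := by
      have := hasWalk_trans hqw (hasWalk_trans (hlarge (k - q - p) (by omega)) hpw)
      rwa [show q + (k - q - p + p) = k by omega] at this
    exact ⟨h1w, h2w, h3w, h4w⟩
  · obtain ⟨m, hm0, hmle, hmw⟩ := short_closed r hr0 hrw
    have hcard : Fintype.card (L × L) = Fintype.card L ^ 2 := by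
      simp [Fintype.card_prod, sq]
    refine ⟨g, hge, ?_, ?_⟩
    · have hdm : g ∣ m := hgdvd m hmw
      have := Nat.le_of_dvd hm0 hdm
      rw [hcard] at hmle
      omega
    · intro k hk hnd
      constructor
      · intro hw
        exact hnd (hgdvd k hw)
      · intro hw
        have hd1 := hgdvd _ (hB k hw)
        have hd2 := hgdvd _ hpq
        have hdk : g ∣ k := by
          have := Nat.dvd_sub hd1 hd2
          rwa [show p + (k + q) - (p + q) = k by omega] at this
        exact hnd hdk
end

section
/- Let Π = (Δ, Σ, 𝒱, ℰ) be an LCL problem for Δ-regular unrooted trees. In every good sequence (𝒱_1, 𝒟_1, 𝒱_2, 𝒟_2, …, 𝒱_k) one has 𝒱_1 ⊇ 𝒱_2 ⊇ ⋯ ⊇ 𝒱_k and 𝒟_1 ⊇ 𝒟_2 ⊇ ⋯ ⊇ 𝒟_{k−1}. Moreover, if Π admits a good sequence of some length k ≥ |𝒱| + 1, then Π admits a good sequence of length k′ for every positive integer k′. -/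
/-- `𝒟_𝒮`: the set of size-2 multisets that are sub-multisets of some `C ∈ 𝒮`. -/
def dOfS {L : Type} [DecidableEq L] (S : Set (Multiset L)) : Set (Multiset L) :=
  {D | Multiset.card D = 2 ∧ ∃ C ∈ S, D ≤ C}

/-- `𝒮↾_𝒟`: configurations of `𝒮` all of whose size-2 sub-multisets lie in `𝒟`. -/
def cfgRestrict {L : Type} [DecidableEq L] (S D : Set (Multiset L)) : Set (Multiset L) :=
  {C | C ∈ S ∧ ∀ D' : Multiset L, Multiset.card D' = 2 → D' ≤ C → D' ∈ D}

/-- `∼` transported to size-2 multisets. -/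
def simMul {L : Type} [DecidableEq L] (D E : Set (Multiset L)) (D₁ D₂ : Multiset L) : Prop :=
  ∃ a b c d : L, D₁ = ({a, b} : Multiset L) ∧ D₂ = ({c, d} : Multiset L) ∧ simPair D E a b c d

/-- Path-flexibility transported to size-2 multisets. -/
def flexMul {L : Type} [DecidableEq L] (D E : Set (Multiset L)) (D₁ : Multiset L) : Prop :=
  ∃ a b : L, D₁ = ({a, b} : Multiset L) ∧ flexPair D E a b

/-- `flexible-SCC(𝒟)`: the set of strongly connected components of `𝒟`
(equivalence classes of `∼` on `𝒟^∼`) all of whose elements are path-flexible. -/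
def flexSCC {L : Type} [DecidableEq L] (D E : Set (Multiset L)) : Set (Set (Multiset L)) :=
  {D' | (∃ D₀ ∈ D, simMul D E D₀ D₀ ∧
          D' = {D₁ | D₁ ∈ D ∧ simMul D E D₁ D₁ ∧ simMul D E D₁ D₀}) ∧
        ∀ D₁ ∈ D', flexMul D E D₁}

/-- A good sequence `(𝒱_1, 𝒟_1, 𝒱_2, 𝒟_2, …, 𝒱_k)` for an LCL problem
`Π = (Δ, Σ, 𝒱, ℰ)` on `Δ`-regular unrooted trees. -/
def goodSeqU {L : Type} [DecidableEq L] (V E : Set (Multiset L)) (k : ℕ)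
    (Vs Ds : ℕ → Set (Multiset L)) : Prop :=
  Vs 1 = lclTrim V E ∧
  (∀ i : ℕ, 1 ≤ i → i ≤ k - 1 → Ds i ∈ flexSCC (dOfS (Vs i)) E) ∧
  (∀ i : ℕ, 2 ≤ i → i ≤ k → Vs i = lclTrim (cfgRestrict (Vs (i - 1)) (Ds (i - 1))) E) ∧
  (Vs k).Nonempty

lemma goodSeq_step {L : Type} [DecidableEq L] {V E : Set (Multiset L)} {k : ℕ}
    {Vs Ds : ℕ → Set (Multiset L)} (hg : goodSeqU V E k Vs Ds) :
    ∀ i : ℕ, 1 ≤ i → i + 1 ≤ k → Vs (i + 1) ⊆ Vs i := by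
  intro i hi hik C hC
  have h3 := hg.2.2.1 (i + 1) (by omega) hik
  simp only [Nat.add_sub_cancel] at h3
  rw [h3] at hC
  exact hC.1.1

lemma goodSeq_Dstep {L : Type} [DecidableEq L] {V E : Set (Multiset L)} {k : ℕ}
    {Vs Ds : ℕ → Set (Multiset L)} (hg : goodSeqU V E k Vs Ds) :
    ∀ i : ℕ, 1 ≤ i → i + 1 ≤ k - 1 → Ds (i + 1) ⊆ Ds i := by
  intro i hi hik D hD
  obtain ⟨⟨D₀, hD₀, hsim, heq⟩, hflex⟩ := hg.2.1 (i + 1) (by omega) hik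
  rw [heq] at hD
  obtain ⟨hDmem, -, -⟩ := hD
  obtain ⟨hcard, C, hC, hle⟩ := hDmem
  have h3 := hg.2.2.1 (i + 1) (by omega) (by omega)
  simp only [Nat.add_sub_cancel] at h3
  rw [h3] at hC
  exact hC.1.2 D hcard hle

lemma goodSeq_mono {L : Type} [DecidableEq L] {V E : Set (Multiset L)} {k : ℕ}
    {Vs Ds : ℕ → Set (Multiset L)} (hg : goodSeqU V E k Vs Ds) :
    ∀ a b : ℕ, 1 ≤ a → a ≤ b → b ≤ k → Vs b ⊆ Vs a := by
  intro a b ha hab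
  induction b, hab using Nat.le_induction with
  | base => intro _; exact subset_rfl
  | succ n hn ih =>
    intro hk
    exact (goodSeq_step hg n (by omega) hk).trans (ih (by omega))

lemma goodSeq_repeat {L : Type} [Fintype L] [DecidableEq L] {V E : Set (Multiset L)} {k : ℕ}
    {Vs Ds : ℕ → Set (Multiset L)} (hg : goodSeqU V E k Vs Ds)
    (hVfin : V.Finite) (hk : V.ncard + 1 ≤ k) :
    ∃ i : ℕ, 1 ≤ i ∧ i + 1 ≤ k ∧ Vs i = Vs (i + 1) := by
  have hk1 : 1 ≤ k := by omega
  have hsub : ∀ j : ℕ, 1 ≤ j → j ≤ k → Vs j ⊆ V := by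
    intro j hj hjk
    refine (goodSeq_mono hg 1 j (le_refl 1) hj hjk).trans ?_
    rw [hg.1]; intro C hC; exact hC.1
  have hfin : ∀ j : ℕ, 1 ≤ j → j ≤ k → (Vs j).Finite :=
    fun j hj hjk => hVfin.subset (hsub j hj hjk)
  by_contra h
  push_neg at h
  have hlt : ∀ i : ℕ, 1 ≤ i → i + 1 ≤ k → (Vs (i + 1)).ncard < (Vs i).ncard := by
    intro i h1 h2
    exact Set.ncard_lt_ncard
      ((goodSeq_step hg i h1 h2).ssubset_of_ne (fun he => h i h1 h2 he.symm))
      (hfin i h1 (by omega))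
  have key : ∀ d : ℕ, 1 + d ≤ k → (Vs (1 + d)).ncard + d ≤ (Vs 1).ncard := by
    intro d
    induction d with
    | zero => intro _; simp
    | succ n ih =>
      intro hd
      have h1 := hlt (1 + n) (by omega) (by omega)
      have h2 := ih (by omega)
      have : 1 + (n + 1) = (1 + n) + 1 := by omega
      rw [this]
      omega
  have hKey := key (k - 1) (by omega)
  have hk' : 1 + (k - 1) = k := by omega
  rw [hk'] at hKey
  have h1 : 0 < (Vs k).ncard := (Set.ncard_pos (hfin k hk1 le_rfl)).mpr hg.2.2.2
  have h2 : (Vs 1).ncard ≤ V.ncard := Set.ncard_le_ncard (hsub 1 le_rfl hk1) hVfin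
  omega


/-- Good sequences are decreasing, and an extremely long good
sequence yields good sequences of every length. -/
theorem stmt7 {L : Type} [Fintype L] [DecidableEq L]
    (Δ : ℕ) (hΔ : 1 ≤ Δ) (V E : Set (Multiset L))
    (hV : ∀ C ∈ V, Multiset.card C = Δ)
    (hE : ∀ D' ∈ E, Multiset.card D' = 2) :
    (∀ (k : ℕ) (Vs Ds : ℕ → Set (Multiset L)), 1 ≤ k → goodSeqU V E k Vs Ds →
      (∀ i : ℕ, 1 ≤ i → i + 1 ≤ k → Vs (i + 1) ⊆ Vs i) ∧
      (∀ i : ℕ, 1 ≤ i → i + 1 ≤ k - 1 → Ds (i + 1) ⊆ Ds i)) ∧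
    ((∃ (k : ℕ) (Vs Ds : ℕ → Set (Multiset L)),
        V.ncard + 1 ≤ k ∧ goodSeqU V E k Vs Ds) →
      ∀ k' : ℕ, 1 ≤ k' → ∃ Vs Ds : ℕ → Set (Multiset L), goodSeqU V E k' Vs Ds) := by
  constructor
  · intro k Vs Ds hk hg
    exact ⟨goodSeq_step hg, goodSeq_Dstep hg⟩
  · rintro ⟨k, Vs, Ds, hk, hg⟩ k' hk'
    have hVfin : V.Finite := by
      apply Set.Finite.subset (Set.finite_range (fun s : Sym L Δ => (s : Multiset L)))
      intro C hC
      exact ⟨⟨C, hV C hC⟩, rfl⟩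
    obtain ⟨i, hi1, hik, heq⟩ := goodSeq_repeat hg hVfin hk
    refine ⟨fun j => Vs (min j i), fun j => Ds (min j i), ?_, ?_, ?_, ?_⟩
    · show Vs (min 1 i) = lclTrim V E
      have h1 : min 1 i = 1 := by omega
      rw [h1]; exact hg.1
    · intro j hj hjk'
      exact hg.2.1 (min j i) (by omega) (by omega)
    · intro j hj hjk'
      show Vs (min j i) =
        lclTrim (cfgRestrict (Vs (min (j - 1) i)) (Ds (min (j - 1) i))) E
      rcases le_or_gt j i with hji | hji
      · have h0 : min j i = j := min_eq_left hji
        have h1 : min (j - 1) i = j - 1 := min_eq_left (by omega)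
        rw [h0, h1]
        exact hg.2.2.1 j hj (by omega)
      · have h0 : min j i = i := min_eq_right (by omega)
        have h1 : min (j - 1) i = i := min_eq_right (by omega)
        rw [h0, h1]
        have h3 := hg.2.2.1 (i + 1) (by omega) hik
        simp only [Nat.add_sub_cancel] at h3
        conv_lhs => rw [heq]
        exact h3
    · exact Set.Nonempty.mono
        (goodSeq_mono hg (min k' i) k (by omega) (by omega) le_rfl) hg.2.2.2
end

section
/- Let G be a finite rooted tree with n nodes and fix positive integers γ, ℓ and L. If n · (2ℓ/(γ + 2ℓ))^{L−1} ≤ γ, then every node of G is removed during the first L iterations of the rake-and-compress process; indeed, every node is removed by the end of the γ rake operations of the L-th iteration. -/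
/-- A finite rooted tree on vertex type `V`, with each edge oriented from child to
parent: `parent v` is the parent of `v` (with `parent root = root`), and every
node reaches the root by iterating `parent`. -/
structure ParentTree (V : Type) where
  root : V
  parent : V → V
  parent_root : parent root = root
  reaches_root : ∀ v : V, ∃ n : ℕ, parent^[n] v = root

namespace ParentTree

variable {V : Type}

/-- Children of `v` that belong to the surviving set `S` (in-neighbors of `v` in the
current forest). -/
def childrenIn (T : ParentTree V) (S : Set V) (v : V) : Set V :=
  {u | u ∈ S ∧ T.parent u = v ∧ u ≠ v}

/-- One rake operation: remove all nodes of indegree `0` in the current forest. -/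
def rake (T : ParentTree V) (S : Set V) : Set V :=
  {v | v ∈ S ∧ (T.childrenIn S v).Nonempty}

/-- `v` has indegree exactly `1` and outdegree exactly `1` in the current forest. -/
def deg11 (T : ParentTree V) (S : Set V) (v : V) : Prop :=
  v ∈ S ∧ (T.childrenIn S v).ncard = 1 ∧ T.parent v ∈ S ∧ T.parent v ≠ v

/-- `v` lies on a directed path of `ℓ` consecutive nodes, each of indegree exactly
`1` and outdegree exactly `1` in the current forest. -/
def onCompressPath (T : ParentTree V) (S : Set V) (ℓ : ℕ) (v : V) : Prop :=
  ∃ f : ℕ → V, (∀ j : ℕ, j < ℓ → T.deg11 S (f j)) ∧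
    (∀ j : ℕ, j + 1 < ℓ → T.parent (f (j + 1)) = f j) ∧
    ∃ j : ℕ, j < ℓ ∧ f j = v

/-- One compress operation (with parameter `ℓ`). -/
def compress (T : ParentTree V) (S : Set V) (ℓ : ℕ) : Set V :=
  {v | v ∈ S ∧ ¬ T.onCompressPath S ℓ v}

/-- Nodes surviving the first `i` iterations of the rake-and-compress process, where
one iteration consists of `γ` rake operations followed by one compress operation. -/
def survivors (T : ParentTree V) (γ ℓ : ℕ) : ℕ → Set V
  | 0 => Set.univ
  | i + 1 => T.compress ((T.rake)^[γ] (survivors T γ ℓ i)) ℓ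

/-- `U_{C,i}^v`: nodes `u` surviving the first `i` iterations that are descendants of
`v` in `G` such that every node on the path from `u` up to `v` also survives
(empty if `v` itself has been removed). -/
def ucSet (T : ParentTree V) (γ ℓ : ℕ) (i : ℕ) (v : V) : Set V :=
  {u | v ∈ T.survivors γ ℓ i ∧
    ∃ n : ℕ, T.parent^[n] u = v ∧ ∀ m : ℕ, m ≤ n → T.parent^[m] u ∈ T.survivors γ ℓ i}

-- ===== auxiliary lemmas =====
attribute [local instance] Classical.propDecidable

lemma rake_subset (T : ParentTree V) (S : Set V) : T.rake S ⊆ S := fun _ h => h.1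

lemma compress_subset (T : ParentTree V) (S : Set V) (ℓ : ℕ) : T.compress S ℓ ⊆ S := fun _ h => h.1

lemma rake_iter_subset (T : ParentTree V) (S : Set V) (k : ℕ) : (T.rake)^[k] S ⊆ S := by
  induction k with
  | zero => simp
  | succ k ih =>
    rw [Function.iterate_succ_apply']
    exact (T.rake_subset _).trans ih

lemma rake_iter_succ_subset (T : ParentTree V) (S : Set V) (k : ℕ) :
    (T.rake)^[k+1] S ⊆ (T.rake)^[k] S := by
  rw [Function.iterate_succ_apply']
  exact T.rake_subset _

noncomputable def depth (T : ParentTree V) (v : V) : ℕ := Nat.find (T.reaches_root v)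

lemma depth_spec (T : ParentTree V) (v : V) : T.parent^[T.depth v] v = T.root :=
  Nat.find_spec (T.reaches_root v)

lemma depth_child (T : ParentTree V) {u v : V} (hp : T.parent u = v) (hne : u ≠ v) :
    T.depth u = T.depth v + 1 := by
  have h1 : T.depth u ≤ T.depth v + 1 := by
    apply Nat.find_le
    rw [Function.iterate_succ_apply, hp]
    exact T.depth_spec v
  have h2 : T.depth v + 1 ≤ T.depth u := by
    rcases Nat.eq_zero_or_pos (T.depth u) with h | h
    · exfalso
      have hu := T.depth_spec u
      rw [h, Function.iterate_zero_apply] at hu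
      have : v = u := by rw [← hp, hu, T.parent_root]
      exact hne this.symm
    · obtain ⟨m, hm⟩ : ∃ m, T.depth u = m + 1 := ⟨T.depth u - 1, by omega⟩
      have hu := T.depth_spec u
      rw [hm, Function.iterate_succ_apply, hp] at hu
      have : T.depth v ≤ m := Nat.find_le hu
      omega
  omega

lemma rake_ssubset [Finite V] (T : ParentTree V) {S : Set V} (hS : S.Nonempty) :
    T.rake S ⊂ S := by
  obtain ⟨v, hv, hmax⟩ := Set.exists_max_image S T.depth (Set.toFinite S) hS
  rw [Set.ssubset_iff_of_subset (T.rake_subset S)]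
  refine ⟨v, hv, fun hvr => ?_⟩
  obtain ⟨u, hu⟩ := hvr.2
  have h1 := T.depth_child hu.2.1 hu.2.2
  have h2 := hmax u hu.1
  omega

lemma rake_iter_card_empty [Finite V] (T : ParentTree V) :
    ∀ (k : ℕ) (S : Set V), S.ncard ≤ k → (T.rake)^[k] S = ∅ := by
  intro k
  induction k with
  | zero =>
    intro S hS
    simpa using (Set.ncard_eq_zero (Set.toFinite S)).1 (Nat.le_zero.1 hS)
  | succ k ih =>
    intro S hS
    rcases Set.eq_empty_or_nonempty S with h | h
    · subst h
      have h0 : T.rake ∅ = ∅ := Set.eq_empty_iff_forall_notMem.2 fun v hv => hv.1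
      exact Function.iterate_fixed h0 (k+1)
    · rw [Function.iterate_succ_apply]
      apply ih
      have := Set.ncard_lt_ncard (T.rake_ssubset h) (Set.toFinite S)
      omega

lemma ncard_prod' {α β : Type} (s : Set α) (t : Set β) :
    (s ×ˢ t).ncard = s.ncard * t.ncard := by
  rw [← Nat.card_coe_set_eq, ← Nat.card_coe_set_eq, ← Nat.card_coe_set_eq,
    Nat.card_congr (Equiv.Set.prod s t), Nat.card_prod]

variable {V : Type}

lemma childrenIn_mono (T : ParentTree V) {A B : Set V} (h : A ⊆ B) (v : V) :
    T.childrenIn A v ⊆ T.childrenIn B v := fun u hu => ⟨h hu.1, hu.2⟩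

lemma mem_rake_iter_of_child (T : ParentTree V) (S : Set V) :
    ∀ (k : ℕ) (w : V), w ∈ S → (T.childrenIn ((T.rake)^[k] S) w).Nonempty →
      w ∈ (T.rake)^[k] S := by
  intro k
  induction k with
  | zero => intro w hw _; simpa using hw
  | succ k ih =>
    intro w hw hne
    have h1 : (T.childrenIn ((T.rake)^[k] S) w).Nonempty :=
      hne.mono (T.childrenIn_mono (T.rake_iter_succ_subset S k) w)
    have h2 : w ∈ (T.rake)^[k] S := ih w hw h1
    rw [Function.iterate_succ_apply']
    exact ⟨h2, h1⟩

lemma chain_exists (T : ParentTree V) (S : Set V) :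
    ∀ (k : ℕ) (x : V), x ∈ (T.rake)^[k] S →
      ∃ g : ℕ → V, g 0 = x ∧ (∀ i, i ≤ k → g i ∈ (T.rake)^[k - i] S) ∧
        (∀ i, i < k → T.parent (g (i + 1)) = g i ∧ g (i + 1) ≠ g i) := by
  intro k
  induction k with
  | zero =>
    intro x hx
    exact ⟨fun _ => x, rfl, fun i hi => by
      simp only [Nat.le_zero.1 hi]; simpa using hx, fun i hi => by omega⟩
  | succ k ih =>
    intro x hx
    have hx' := hx
    rw [Function.iterate_succ_apply'] at hx'
    obtain ⟨hxS, c, hc⟩ := hx'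
    obtain ⟨g, hg0, hmem, hpar⟩ := ih c hc.1
    refine ⟨fun i => match i with | 0 => x | (j+1) => g j, rfl, ?_, ?_⟩
    · intro i hi
      match i with
      | 0 => simpa using hx
      | (j+1) =>
        have := hmem j (by omega)
        simpa [Nat.succ_sub_succ] using this
    · intro i hi
      match i with
      | 0 =>
        show T.parent (g 0) = x ∧ g 0 ≠ x
        rw [hg0]
        exact ⟨hc.2.1, hc.2.2⟩
      | (j+1) => exact hpar j (by omega)

def leaves (T : ParentTree V) (A : Set V) : Set V := {v | v ∈ A ∧ ¬ (T.childrenIn A v).Nonempty}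

lemma leaves_subset (T : ParentTree V) (A : Set V) : T.leaves A ⊆ A := fun _ h => h.1

lemma rake_count [Finite V] (T : ParentTree V) (S : Set V) (γ : ℕ) (hγ : 0 < γ) :
    γ * (T.leaves ((T.rake)^[γ] S)).ncard + ((T.rake)^[γ] S).ncard ≤ S.ncard := by
  set S' := (T.rake)^[γ] S with hS'def
  have hch : ∀ v : V, ∃ g : ℕ → V, v ∈ T.leaves S' →
      (∀ i, i < γ → g i ∈ S ∧ g i ∉ S') ∧ (∀ i, i < γ → T.parent^[i+1] (g i) = v) ∧
      (∀ m i, m ≤ i → i < γ → T.parent^[m] (g i) = g (i - m)) := by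
    intro v
    by_cases hv : v ∈ T.leaves S'
    · have hv1 : v ∈ S' := hv.1
      have hγ1 : γ - 1 + 1 = γ := Nat.succ_pred_eq_of_pos hγ
      have hv2 : v ∈ (T.rake)^[γ - 1 + 1] S := by rw [hγ1]; exact hv1
      rw [Function.iterate_succ_apply'] at hv2
      obtain ⟨-, c, hc⟩ := hv2
      obtain ⟨g, hg0, hmem, hpar⟩ := T.chain_exists S (γ - 1) c hc.1
      have hmemS : ∀ i, i < γ → g i ∈ S := by
        intro i hi
        exact T.rake_iter_subset S _ (hmem i (by omega))
      have hparent : ∀ i, i + 1 < γ → T.parent (g (i+1)) = g i ∧ g (i+1) ≠ g i := by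
        intro i hi
        exact hpar i (by omega)
      have hnotS' : ∀ i, i < γ → g i ∉ S' := by
        intro i
        induction i with
        | zero =>
          intro _ h0
          rw [hg0] at h0
          exact hv.2 ⟨c, h0, hc.2.1, hc.2.2⟩
        | succ i ihi =>
          intro hi hiS
          have hgi : g i ∈ S := hmemS i (by omega)
          have : (T.childrenIn S' (g i)).Nonempty :=
            ⟨g (i+1), hiS, (hparent i hi).1, (hparent i hi).2⟩
          exact ihi (by omega) (T.mem_rake_iter_of_child S γ (g i) hgi this)
      have hpv : ∀ i, i < γ → T.parent^[i+1] (g i) = v := by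
        intro i
        induction i with
        | zero =>
          intro _
          rw [Function.iterate_one, hg0]
          exact hc.2.1
        | succ i ihi =>
          intro hi
          rw [Function.iterate_succ_apply, (hparent i hi).1]
          exact ihi (by omega)
      have hit : ∀ m i, m ≤ i → i < γ → T.parent^[m] (g i) = g (i - m) := by
        intro m
        induction m with
        | zero => intro i _ _; simp
        | succ m ihm =>
          intro i hmi hi
          obtain ⟨j, rfl⟩ : ∃ j, i = j + 1 := ⟨i - 1, by omega⟩
          rw [Function.iterate_succ_apply, (hparent j (by omega)).1]
          have := ihm j (by omega) (by omega)
          rw [this]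
          congr 1
          omega
      exact ⟨g, fun _ => ⟨fun i hi => ⟨hmemS i hi, hnotS' i hi⟩, hpv, hit⟩⟩
    · exact ⟨fun _ => v, fun h => absurd h hv⟩
  set G : V → ℕ → V := fun v => (hch v).choose with hGdef
  have hG : ∀ v, v ∈ T.leaves S' →
      (∀ i, i < γ → G v i ∈ S ∧ G v i ∉ S') ∧ (∀ i, i < γ → T.parent^[i+1] (G v i) = v) ∧
      (∀ m i, m ≤ i → i < γ → T.parent^[m] (G v i) = G v (i - m)) :=
    fun v hv => (hch v).choose_spec hv
  have key : ∀ v i w j, v ∈ T.leaves S' → w ∈ T.leaves S' → i < γ → j < γ → i ≤ j →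
      G v i = G w j → v = w ∧ i = j := by
    intro v i w j hv hw hi hj hij heq
    rcases Nat.lt_or_ge i j with hlt | hge
    · exfalso
      have h1 : T.parent^[i+1] (G v i) = v := (hG v hv).2.1 i hi
      have h2 : T.parent^[i+1] (G w j) = G w (j - (i+1)) := (hG w hw).2.2 (i+1) j (by omega) hj
      have h3 : v = G w (j - (i+1)) := by rw [← h1, heq, h2]
      have h4 := ((hG w hw).1 (j - (i+1)) (by omega)).2
      rw [← h3] at h4
      exact h4 hv.1
    · have : i = j := by omega
      subst this
      refine ⟨?_, rfl⟩
      rw [← (hG v hv).2.1 i hi, heq, (hG w hw).2.1 i hi]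
  have hinj : Set.InjOn (fun p : V × ℕ => G p.1 p.2) ((T.leaves S') ×ˢ (Set.Iio γ)) := by
    rintro ⟨v, i⟩ ⟨hv, hi⟩ ⟨w, j⟩ ⟨hw, hj⟩ heq
    simp only [Set.mem_Iio] at hi hj
    rcases le_or_gt i j with h | h
    · obtain ⟨h1, h2⟩ := key v i w j hv hw hi hj h heq
      simp [h1, h2]
    · obtain ⟨h1, h2⟩ := key w j v i hw hv hj hi h.le heq.symm
      simp [h1, h2]
  have hmaps : ∀ p ∈ (T.leaves S') ×ˢ (Set.Iio γ), (fun p : V × ℕ => G p.1 p.2) p ∈ S \ S' := by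
    rintro ⟨v, i⟩ ⟨hv, hi⟩
    simp only [Set.mem_Iio] at hi
    exact ⟨((hG v hv).1 i hi).1, ((hG v hv).1 i hi).2⟩
  have hcard := Set.ncard_le_ncard_of_injOn _ hmaps hinj (Set.toFinite _)
  rw [ncard_prod'] at hcard
  have hIio : (Set.Iio γ).ncard = γ := by
    rw [← Finset.coe_range, Set.ncard_coe_finset, Finset.card_range]
  rw [hIio, mul_comm] at hcard
  have hdiff : (S \ S').ncard + S'.ncard = S.ncard :=
    Set.ncard_diff_add_ncard_of_subset (T.rake_iter_subset S γ) (Set.toFinite S)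
  omega
lemma compress_le [Finite V] (T : ParentTree V) (A : Set V) (ℓ : ℕ) (hℓ : 0 < ℓ) :
    (T.compress A ℓ).ncard ≤ ℓ * {v | v ∈ A ∧ ¬ T.deg11 A v}.ncard := by
  set ND := {v | v ∈ A ∧ ¬ T.deg11 A v} with hNDdef
  set nxt : V → V := fun v => if h : ∃ u, T.childrenIn A v = {u} then h.choose else v with hnxtdef
  have hnext : ∀ v, T.deg11 A v → T.childrenIn A v = {nxt v} := by
    intro v hv
    obtain ⟨u, hu⟩ := Set.ncard_eq_one.1 hv.2.1
    have hex : ∃ u, T.childrenIn A v = {u} := ⟨u, hu⟩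
    simp only [hnxtdef, dif_pos hex]
    exact hex.choose_spec
  have hnext_mem : ∀ v, T.deg11 A v → nxt v ∈ A ∧ T.parent (nxt v) = v ∧ nxt v ≠ v := by
    intro v hv
    have : nxt v ∈ T.childrenIn A v := by rw [hnext v hv]; rfl
    exact this
  have hesc : ∀ v ∈ T.compress A ℓ, ∃ j, j < ℓ ∧ ¬ T.deg11 A (nxt^[j] v) := by
    intro v hv
    by_contra h
    push_neg at h
    apply hv.2
    refine ⟨fun j => nxt^[j] v, fun j hj => h j hj, ?_, 0, hℓ, rfl⟩
    intro j hj
    show T.parent (nxt^[j+1] v) = nxt^[j] v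
    rw [Function.iterate_succ_apply']
    exact (hnext_mem _ (h j (by omega))).2.1
  have hKex : ∀ v : V, ∃ k : ℕ, v ∈ T.compress A ℓ →
      k < ℓ ∧ ¬ T.deg11 A (nxt^[k] v) ∧ ∀ j, j < k → T.deg11 A (nxt^[j] v) := by
    intro v
    by_cases hv : v ∈ T.compress A ℓ
    · obtain ⟨j, hj⟩ := hesc v hv
      have hh : ∃ j, j < ℓ ∧ ¬ T.deg11 A (nxt^[j] v) := ⟨j, hj⟩
      refine ⟨Nat.find hh, fun _ => ⟨(Nat.find_spec hh).1, (Nat.find_spec hh).2, ?_⟩⟩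
      intro m hm
      by_contra hnd
      have hmin := Nat.find_min hh hm
      push_neg at hmin
      have hml : m < ℓ := by
        have := (Nat.find_spec hh).1
        omega
      exact hnd (hmin hml)
    · exact ⟨0, fun h => absurd h hv⟩
  set K : V → ℕ := fun v => (hKex v).choose with hKdef
  have hK : ∀ v ∈ T.compress A ℓ, K v < ℓ ∧ ¬ T.deg11 A (nxt^[K v] v) ∧
      ∀ j, j < K v → T.deg11 A (nxt^[j] v) := fun v hv => (hKex v).choose_spec hv
  have hanc : ∀ (k : ℕ) (v : V), (∀ j, j < k → T.deg11 A (nxt^[j] v)) →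
      T.parent^[k] (nxt^[k] v) = v := by
    intro k
    induction k with
    | zero => intro v _; rfl
    | succ k ih =>
      intro v h
      rw [Function.iterate_succ_apply' (f := nxt), Function.iterate_succ_apply,
        (hnext_mem _ (h k (by omega))).2.1]
      exact ih v (fun j hj => h j (by omega))
  have hmem_walk : ∀ v ∈ T.compress A ℓ, nxt^[K v] v ∈ A := by
    intro v hv
    have hstep : ∀ j, j ≤ K v → nxt^[j] v ∈ A := by
      intro j
      induction j with
      | zero => intro _; exact hv.1
      | succ j ih =>
        intro hj
        rw [Function.iterate_succ_apply']
        exact (hnext_mem _ ((hK v hv).2.2 j (by omega))).1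
    exact hstep (K v) le_rfl
  have hmaps : ∀ v ∈ T.compress A ℓ,
      (fun v => (nxt^[K v] v, K v)) v ∈ ND ×ˢ (Set.Iio ℓ) := by
    intro v hv
    exact ⟨⟨hmem_walk v hv, (hK v hv).2.1⟩, (hK v hv).1⟩
  have hinj : Set.InjOn (fun v => (nxt^[K v] v, K v)) (T.compress A ℓ) := by
    intro v hv w hw heq
    simp only [Prod.mk.injEq] at heq
    obtain ⟨h1, h2⟩ := heq
    have hv' : T.parent^[K v] (nxt^[K v] v) = v := hanc (K v) v (hK v hv).2.2
    have hw' : T.parent^[K w] (nxt^[K w] w) = w := hanc (K w) w (hK w hw).2.2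
    rw [← hv', h1, h2, hw']
  have hcard := Set.ncard_le_ncard_of_injOn _ hmaps hinj (Set.toFinite _)
  rw [ncard_prod'] at hcard
  have hIio : (Set.Iio ℓ).ncard = ℓ := by
    rw [← Finset.coe_range, Set.ncard_coe_finset, Finset.card_range]
  rw [hIio, mul_comm] at hcard
  exact hcard
lemma nd_le [Finite V] (T : ParentTree V) (A : Set V) :
    {v | v ∈ A ∧ ¬ T.deg11 A v}.ncard ≤ 2 * (T.leaves A).ncard := by
  have hA : A.Finite := Set.toFinite A
  set F := hA.toFinset with hFdef
  set NR := {u | u ∈ A ∧ T.parent u ∈ A ∧ T.parent u ≠ u} with hNRdef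
  have hNRfin : NR.Finite := Set.toFinite _
  -- sum of indegrees equals number of non-root vertices
  have hsum : ∑ v ∈ F, (T.childrenIn A v).ncard = NR.ncard := by
    rw [Set.ncard_eq_toFinset_card _ hNRfin]
    rw [Finset.card_eq_sum_card_fiberwise (f := T.parent) (t := F)
      (fun u hu => hA.mem_toFinset.2 ((hNRfin.mem_toFinset.1 hu).2.1))]
    apply Finset.sum_congr rfl
    intro v hv
    have hvA : v ∈ A := hA.mem_toFinset.1 hv
    rw [Set.ncard_eq_toFinset_card _ (Set.toFinite _)]
    congr 1
    apply Finset.ext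
    intro u
    simp only [Finset.mem_filter, Set.Finite.mem_toFinset, hNRdef, childrenIn,
      Set.mem_setOf_eq]
    constructor
    · rintro ⟨h1, h2, h3⟩
      exact ⟨⟨h1, h2 ▸ hvA, fun h => h3 (by rw [← h2, h])⟩, h2⟩
    · rintro ⟨⟨h1, _, h3⟩, h4⟩
      refine ⟨h1, h4, fun h => h3 ?_⟩
      rw [h4]
      exact h.symm
  set F0 := F.filter (fun v => (T.childrenIn A v).ncard = 0) with hF0
  set F1 := F.filter (fun v => (T.childrenIn A v).ncard = 1) with hF1
  set F2 := F.filter (fun v => 2 ≤ (T.childrenIn A v).ncard) with hF2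
  have hsplit : F0.card + F1.card + F2.card = F.card := by
    rw [hF0, hF1, hF2, Finset.card_filter, Finset.card_filter, Finset.card_filter,
      ← Finset.sum_add_distrib, ← Finset.sum_add_distrib, Finset.card_eq_sum_ones F]
    apply Finset.sum_congr rfl
    intro x _
    by_cases h0 : (T.childrenIn A x).ncard = 0
    · rw [if_pos h0, if_neg (by omega), if_neg (by omega)]
    · by_cases h1 : (T.childrenIn A x).ncard = 1
      · rw [if_neg h0, if_pos h1, if_neg (by omega)]
      · rw [if_neg h0, if_neg h1, if_pos (by omega)]
  have hlow : F1.card + 2 * F2.card ≤ ∑ v ∈ F, (T.childrenIn A v).ncard := by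
    have hsub : F1 ∪ F2 ⊆ F := by
      apply Finset.union_subset <;> exact Finset.filter_subset _ _
    have hdisj : Disjoint F1 F2 := by
      rw [Finset.disjoint_filter]
      intro x _ h1
      omega
    have h1 : ∑ v ∈ F1 ∪ F2, (T.childrenIn A v).ncard ≤ ∑ v ∈ F, (T.childrenIn A v).ncard :=
      Finset.sum_le_sum_of_subset hsub
    rw [Finset.sum_union hdisj] at h1
    have h2 : F1.card ≤ ∑ v ∈ F1, (T.childrenIn A v).ncard := by
      rw [Finset.card_eq_sum_ones]
      apply Finset.sum_le_sum
      intro x hx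
      have := (Finset.mem_filter.1 hx).2
      omega
    have h3 : 2 * F2.card ≤ ∑ v ∈ F2, (T.childrenIn A v).ncard := by
      calc 2 * F2.card = ∑ _x ∈ F2, 2 := by rw [Finset.sum_const, smul_eq_mul, mul_comm]
        _ ≤ _ := Finset.sum_le_sum (fun x hx => (Finset.mem_filter.1 hx).2)
    omega
  set Rt := A \ NR with hRt
  have hNRsub : NR ⊆ A := fun u hu => hu.1
  have hdiff : Rt.ncard + NR.ncard = A.ncard :=
    Set.ncard_diff_add_ncard_of_subset hNRsub hA
  have hAF : A.ncard = F.card := Set.ncard_eq_toFinset_card _ hA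
  -- F2 + Rt ≤ F0
  have hkey : F2.card + Rt.ncard ≤ F0.card := by omega
  -- leaves correspond to F0
  have hleaves : (T.leaves A).ncard = F0.card := by
    rw [Set.ncard_eq_toFinset_card _ (Set.toFinite _)]
    congr 1
    apply Finset.ext
    intro v
    simp only [Set.Finite.mem_toFinset, hF0, Finset.mem_filter, leaves, Set.mem_setOf_eq,
      Set.Finite.mem_toFinset]
    constructor
    · rintro ⟨h1, h2⟩
      refine ⟨hA.mem_toFinset.2 h1, ?_⟩
      rw [Set.ncard_eq_zero (Set.toFinite _), ← Set.not_nonempty_iff_eq_empty]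
      exact h2
    · rintro ⟨h1, h2⟩
      rw [Set.ncard_eq_zero (Set.toFinite _), ← Set.not_nonempty_iff_eq_empty] at h2
      exact ⟨hA.mem_toFinset.1 h1, h2⟩
  -- ND is inside leaves ∪ F2-set ∪ Rt
  have hndsub : {v | v ∈ A ∧ ¬ T.deg11 A v} ⊆
      (T.leaves A) ∪ ({v | v ∈ A ∧ 2 ≤ (T.childrenIn A v).ncard} ∪ Rt) := by
    rintro v ⟨hvA, hvd⟩
    by_cases hc : (T.childrenIn A v).ncard = 1
    · right; right
      refine ⟨hvA, fun hcon => hvd ⟨hvA, hc, hcon.2.1, hcon.2.2⟩⟩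
    · by_cases hc0 : (T.childrenIn A v).ncard = 0
      · left
        refine ⟨hvA, ?_⟩
        rw [Set.ncard_eq_zero (Set.toFinite _), ← Set.not_nonempty_iff_eq_empty] at hc0
        exact hc0
      · right; left
        exact ⟨hvA, by omega⟩
  have hF2s : {v | v ∈ A ∧ 2 ≤ (T.childrenIn A v).ncard}.ncard = F2.card := by
    rw [Set.ncard_eq_toFinset_card _ (Set.toFinite _)]
    congr 1
    apply Finset.ext
    intro v
    simp only [Set.Finite.mem_toFinset, hF2, Finset.mem_filter, Set.mem_setOf_eq,
      Set.Finite.mem_toFinset]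
    constructor
    · rintro ⟨h1, h2⟩; exact ⟨hA.mem_toFinset.2 h1, h2⟩
    · rintro ⟨h1, h2⟩; exact ⟨hA.mem_toFinset.1 h1, h2⟩
  have hcard := Set.ncard_le_ncard hndsub (Set.toFinite _)
  have hu1 := Set.ncard_union_le (T.leaves A)
    ({v | v ∈ A ∧ 2 ≤ (T.childrenIn A v).ncard} ∪ Rt)
  have hu2 := Set.ncard_union_le {v | v ∈ A ∧ 2 ≤ (T.childrenIn A v).ncard} Rt
  rw [hF2s] at hu2
  omega
lemma iter_step [Finite V] (T : ParentTree V) (S : Set V) (γ ℓ : ℕ) (hγ : 0 < γ) (hℓ : 0 < ℓ) :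
    (γ + 2 * ℓ) * (T.compress ((T.rake)^[γ] S) ℓ).ncard ≤ 2 * ℓ * S.ncard := by
  set S' := (T.rake)^[γ] S with hS'
  set S'' := T.compress S' ℓ with hS''
  have h1 : S''.ncard ≤ ℓ * {v | v ∈ S' ∧ ¬ T.deg11 S' v}.ncard := T.compress_le S' ℓ hℓ
  have h2 := T.nd_le S'
  have h3 := T.rake_count S γ hγ
  have h4 : S''.ncard ≤ S'.ncard := Set.ncard_le_ncard (T.compress_subset _ _) (Set.toFinite _)
  have h5 : S''.ncard ≤ 2 * ℓ * (T.leaves S').ncard := by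
    calc S''.ncard ≤ ℓ * {v | v ∈ S' ∧ ¬ T.deg11 S' v}.ncard := h1
      _ ≤ ℓ * (2 * (T.leaves S').ncard) := Nat.mul_le_mul_left ℓ h2
      _ = 2 * ℓ * (T.leaves S').ncard := by ring
  calc (γ + 2 * ℓ) * S''.ncard = γ * S''.ncard + 2 * ℓ * S''.ncard := by ring
    _ ≤ γ * (2 * ℓ * (T.leaves S').ncard) + 2 * ℓ * S'.ncard := by
        exact Nat.add_le_add (Nat.mul_le_mul_left γ h5) (Nat.mul_le_mul_left _ h4)
    _ = 2 * ℓ * (γ * (T.leaves S').ncard + S'.ncard) := by ring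
    _ ≤ 2 * ℓ * S.ncard := Nat.mul_le_mul_left _ h3

lemma surv_bound [Finite V] (T : ParentTree V) (γ ℓ : ℕ) (hγ : 0 < γ) (hℓ : 0 < ℓ) (i : ℕ) :
    (γ + 2 * ℓ) ^ i * (T.survivors γ ℓ i).ncard ≤ (2 * ℓ) ^ i * (Set.univ : Set V).ncard := by
  induction i with
  | zero => simp [survivors]
  | succ i ih =>
    have hstep := T.iter_step (T.survivors γ ℓ i) γ ℓ hγ hℓ
    have hs : T.survivors γ ℓ (i + 1) = T.compress ((T.rake)^[γ] (T.survivors γ ℓ i)) ℓ := rfl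
    calc (γ + 2 * ℓ) ^ (i + 1) * (T.survivors γ ℓ (i + 1)).ncard
        = (γ + 2 * ℓ) ^ i * ((γ + 2 * ℓ) * (T.survivors γ ℓ (i + 1)).ncard) := by ring
      _ ≤ (γ + 2 * ℓ) ^ i * (2 * ℓ * (T.survivors γ ℓ i).ncard) := by
          exact Nat.mul_le_mul_left _ (by rw [hs]; exact hstep)
      _ = 2 * ℓ * ((γ + 2 * ℓ) ^ i * (T.survivors γ ℓ i).ncard) := by ring
      _ ≤ 2 * ℓ * ((2 * ℓ) ^ i * (Set.univ : Set V).ncard) := Nat.mul_le_mul_left _ ih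
      _ = (2 * ℓ) ^ (i + 1) * (Set.univ : Set V).ncard := by ring


end ParentTree

/-- Number of layers of the rake-and-compress process:
if `n · (2ℓ/(γ+2ℓ))^{L−1} ≤ γ` then every node is removed by the end of the `γ`
rake operations of the `L`-th iteration (and in particular within `L` iterations). -/
theorem stmt15 {V : Type} [Fintype V] (T : ParentTree V) (γ ℓ L : ℕ)
    (hγ : 0 < γ) (hℓ : 0 < ℓ) (hL : 0 < L)
    (hineq : (Fintype.card V : ℚ) * ((2 * ℓ : ℚ) / (γ + 2 * ℓ)) ^ (L - 1) ≤ (γ : ℚ)) :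
    (T.rake)^[γ] (T.survivors γ ℓ (L - 1)) = ∅ ∧ T.survivors γ ℓ L = ∅ := by
  set m := L - 1 with hm
  have hLm : L = m + 1 := by omega
  -- convert the rational inequality to a natural one
  have hpos : (0 : ℚ) < (γ : ℚ) + 2 * ℓ := by positivity
  have hnat : (Fintype.card V) * (2 * ℓ) ^ m ≤ γ * (γ + 2 * ℓ) ^ m := by
    have h1 : ((Fintype.card V : ℚ) * (2 * ℓ) ^ m) / ((γ + 2 * ℓ) ^ m) ≤ (γ : ℚ) := by
      rw [mul_div_assoc, ← div_pow]
      exact hineq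
    have h2 : ((Fintype.card V : ℚ)) * (2 * ℓ) ^ m ≤ (γ : ℚ) * ((γ + 2 * ℓ) ^ m) := by
      rw [div_le_iff₀ (by positivity)] at h1
      exact h1
    exact_mod_cast h2
  have hsb := T.surv_bound γ ℓ hγ hℓ m
  rw [Set.ncard_univ, Nat.card_eq_fintype_card] at hsb
  have hcard : (T.survivors γ ℓ m).ncard ≤ γ := by
    have h3 : (γ + 2 * ℓ) ^ m * (T.survivors γ ℓ m).ncard ≤ (γ + 2 * ℓ) ^ m * γ := by
      calc (γ + 2 * ℓ) ^ m * (T.survivors γ ℓ m).ncard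
          ≤ (2 * ℓ) ^ m * Fintype.card V := hsb
        _ = Fintype.card V * (2 * ℓ) ^ m := by ring
        _ ≤ γ * (γ + 2 * ℓ) ^ m := hnat
        _ = (γ + 2 * ℓ) ^ m * γ := by ring
    exact Nat.le_of_mul_le_mul_left h3 (by positivity)
  have hrake : (T.rake)^[γ] (T.survivors γ ℓ m) = ∅ :=
    T.rake_iter_card_empty γ (T.survivors γ ℓ m) hcard
  refine ⟨hrake, ?_⟩
  rw [hLm]
  show T.compress ((T.rake)^[γ] (T.survivors γ ℓ m)) ℓ = ∅
  rw [hrake]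
  exact Set.eq_empty_iff_forall_notMem.2 fun v hv => hv.1
end

section
/- Let Π = (Δ, Σ, 𝒱, ℰ) be an LCL problem for Δ-regular unrooted trees and let 𝒮 ⊆ 𝒱. Define Σ_1 = {σ ∈ Σ : σ occurs in some C ∈ 𝒮}, and for i ≥ 2 define Σ_i = {σ ∈ Σ_{i−1} : there exists C ∈ 𝒮 with σ occurring in C such that every label α of the size-(Δ−1) multiset obtained from C by removing one occurrence of σ satisfies {α, β} ∈ ℰ for some β ∈ Σ_{i−1}}. Then Σ_1 ⊇ Σ_2 ⊇ ⋯, the sequence stabilizes with Σ_i = Σ_{|Σ|+1} for all i ≥ |Σ|+1 (set Σ* := Σ_{|Σ|+1}), and for every C ∈ 𝒮: C ∈ trim(𝒮) if and only if every label α occurring in C satisfies {α, β} ∈ ℰ for some β ∈ Σ*. -/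
/-- The sequence `Σ_1 ⊇ Σ_2 ⊇ ⋯` used to compute `trim(𝒮)` for unrooted trees:
`Σ_1` is the set of labels occurring in some `C ∈ 𝒮`, and `σ ∈ Σ_{i}` (for `i ≥ 2`)
iff `σ ∈ Σ_{i-1}` and there is `C ∈ 𝒮` containing `σ` such that every label `α` of
`C` minus one occurrence of `σ` satisfies `{α, β} ∈ ℰ` for some `β ∈ Σ_{i-1}`. -/
def sigmaSeq {L : Type} [DecidableEq L] (S E : Set (Multiset L)) : ℕ → Set L
  | 0 => Set.univ
  | 1 => {σ | ∃ C ∈ S, σ ∈ C}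
  | i + 2 => {σ | σ ∈ sigmaSeq S E (i + 1) ∧
      ∃ C ∈ S, σ ∈ C ∧
        ∀ α ∈ C.erase σ, ∃ β ∈ sigmaSeq S E (i + 1), ({α, β} : Multiset L) ∈ E}

section Aux

variable {L : Type} [DecidableEq L] (S E : Set (Multiset L))

lemma sq_step (i : ℕ) : sigmaSeq S E (i + 2) ⊆ sigmaSeq S E (i + 1) := by
  intro σ hσ
  exact hσ.1

lemma sq_antitone : ∀ (d k : ℕ), 1 ≤ k → sigmaSeq S E (k + d) ⊆ sigmaSeq S E k := by
  intro d
  induction d with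
  | zero => intro k _; exact subset_rfl
  | succ d ih =>
      intro k hk
      have h1 : sigmaSeq S E (k + d + 1) ⊆ sigmaSeq S E (k + d) := by
        obtain ⟨m, hm⟩ : ∃ m, k + d = m + 1 := ⟨k + d - 1, by omega⟩
        rw [hm]
        exact sq_step S E m
      have : k + (d + 1) = k + d + 1 := by omega
      rw [this]
      exact h1.trans (ih k hk)

lemma compat_mono : ∀ (i : ℕ) (τ : L), lclCompat S E (i + 1) τ → lclCompat S E i τ := by
  intro i
  induction i with
  | zero => intro τ _; trivial
  | succ i ih =>
      intro τ h
      simp only [lclCompat] at h ⊢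
      obtain ⟨C, hC, hτ, hrest⟩ := h
      refine ⟨C, hC, hτ, fun β hβ => ?_⟩
      obtain ⟨τ', he, hc⟩ := hrest β hβ
      exact ⟨τ', he, ih τ' hc⟩

lemma sandwich : ∀ (i : ℕ),
    (∀ τ : L, lclCompat S E (i + 1) τ → τ ∈ sigmaSeq S E (i + 1)) ∧
    (∀ τ : L, τ ∈ sigmaSeq S E (i + 1) → lclCompat S E i τ) := by
  intro i
  induction i with
  | zero =>
      constructor
      · intro τ h
        simp only [lclCompat] at h
        obtain ⟨C, hC, hτ, _⟩ := h
        exact ⟨C, hC, hτ⟩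
      · intro τ _; trivial
  | succ i ih =>
      obtain ⟨ih1, ih2⟩ := ih
      constructor
      · intro τ h
        have h' := h
        simp only [lclCompat] at h'
        obtain ⟨C, hC, hτ, hrest⟩ := h'
        refine ⟨ih1 τ (compat_mono S E (i + 1) τ h), C, hC, hτ, fun α hα => ?_⟩
        obtain ⟨τ', he, hc⟩ := hrest α hα
        exact ⟨τ', ih1 τ' hc, he⟩
      · intro τ h
        obtain ⟨_, C, hC, hτ, hrest⟩ := h
        simp only [lclCompat]
        refine ⟨C, hC, hτ, fun β hβ => ?_⟩
        obtain ⟨β', hβ', he⟩ := hrest β hβ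
        exact ⟨β', he, ih2 β' hβ'⟩

/-- the step map: `sigmaSeq (i+2) = sqG (sigmaSeq (i+1))`. -/
def sqG (X : Set L) : Set L :=
  {σ | σ ∈ X ∧ ∃ C ∈ S, σ ∈ C ∧ ∀ α ∈ C.erase σ, ∃ β ∈ X, ({α, β} : Multiset L) ∈ E}

lemma sq_succ (i : ℕ) : sigmaSeq S E (i + 2) = sqG S E (sigmaSeq S E (i + 1)) := rfl

lemma sq_propagate (j : ℕ) (hj : 1 ≤ j) (h : sigmaSeq S E j = sigmaSeq S E (j + 1)) :
    ∀ k, sigmaSeq S E (j + k) = sigmaSeq S E j := by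
  intro k
  induction k with
  | zero => rfl
  | succ k ih =>
      obtain ⟨m', hm'⟩ : ∃ m', j = m' + 1 := ⟨j - 1, by omega⟩
      have e1 : j + (k + 1) = (j + k - 1) + 2 := by omega
      have e2 : j + k = (j + k - 1) + 1 := by omega
      have e3 : j + 1 = m' + 2 := by omega
      calc sigmaSeq S E (j + (k + 1))
          = sqG S E (sigmaSeq S E (j + k)) := by rw [e1, sq_succ, ← e2]
        _ = sqG S E (sigmaSeq S E j) := by rw [ih]
        _ = sqG S E (sigmaSeq S E (m' + 1)) := by rw [hm']
        _ = sigmaSeq S E (m' + 2) := (sq_succ S E m').symm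
        _ = sigmaSeq S E (j + 1) := by rw [e3]
        _ = sigmaSeq S E j := h.symm

lemma sq_exists_stable :
    ∀ {n : ℕ} [Fintype L], n = Fintype.card L →
    ∃ j, 1 ≤ j ∧ j ≤ n + 1 ∧ sigmaSeq S E j = sigmaSeq S E (j + 1) := by
  intro n _ hn
  by_contra hcon
  push_neg at hcon
  have key : ∀ j, j ≤ n + 1 → (sigmaSeq S E (j + 1)).ncard + j ≤ (sigmaSeq S E 1).ncard := by
    intro j
    induction j with
    | zero => intro _; simp
    | succ j ih =>
        intro hj
        simp only [show j + 1 + 1 = j + 2 from rfl]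
        have hne : sigmaSeq S E (j + 1) ≠ sigmaSeq S E (j + 2) :=
          hcon (j + 1) (by omega) (by omega)
        have hss : sigmaSeq S E (j + 2) ⊂ sigmaSeq S E (j + 1) :=
          (sq_step S E j).ssubset_of_ne (fun h => hne h.symm)
        have hlt : (sigmaSeq S E (j + 2)).ncard < (sigmaSeq S E (j + 1)).ncard :=
          Set.ncard_lt_ncard hss (Set.toFinite _)
        have := ih (by omega)
        omega
  have h1 : (sigmaSeq S E 1).ncard ≤ n := by
    calc (sigmaSeq S E 1).ncard ≤ (Set.univ : Set L).ncard :=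
          Set.ncard_le_ncard (Set.subset_univ _) (Set.toFinite _)
      _ = n := by rw [Set.ncard_univ, Nat.card_eq_fintype_card, hn]
  have := key (n + 1) le_rfl
  omega

lemma sq_stable [Fintype L] :
    ∀ i, Fintype.card L + 1 ≤ i → sigmaSeq S E i = sigmaSeq S E (Fintype.card L + 1) := by
  set n := Fintype.card L with hn
  obtain ⟨j, hj1, hj2, hj3⟩ := sq_exists_stable S E hn
  intro i hi
  have hall := sq_propagate S E j hj1 hj3
  have hi' : sigmaSeq S E i = sigmaSeq S E j := by
    have : i = j + (i - j) := by omega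
    rw [this]; exact hall _
  have hn' : sigmaSeq S E (n + 1) = sigmaSeq S E j := by
    have : n + 1 = j + (n + 1 - j) := by omega
    rw [this]; exact hall _
  rw [hi', hn']

lemma sq_star_subset [Fintype L] (k : ℕ) :
    sigmaSeq S E (Fintype.card L + 1) ⊆ sigmaSeq S E (k + 1) := by
  rcases le_or_gt (k + 1) (Fintype.card L + 1) with h | h
  · have : Fintype.card L + 1 = (k + 1) + (Fintype.card L + 1 - (k + 1)) := by omega
    rw [this]
    exact sq_antitone S E _ _ (by omega)
  · rw [sq_stable S E (k + 1) (by omega)]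

lemma star_compat [Fintype L] (k : ℕ) (τ : L)
    (h : τ ∈ sigmaSeq S E (Fintype.card L + 1)) : lclCompat S E k τ :=
  (sandwich S E k).2 τ (sq_star_subset S E k h)

end Aux

/-- Characterization of `trim(𝒮)` via the stabilizing sequence
`Σ_1 ⊇ Σ_2 ⊇ ⋯` with fixed point `Σ* = Σ_{|Σ|+1}`. -/
theorem stmt19 {L : Type} [Fintype L] [DecidableEq L]
    (Δ : ℕ) (hΔ : 1 ≤ Δ) (V E : Set (Multiset L))
    (hV : ∀ C ∈ V, Multiset.card C = Δ)
    (hE : ∀ D ∈ E, Multiset.card D = 2)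
    (S : Set (Multiset L)) (hS : S ⊆ V) :
    (∀ i : ℕ, 1 ≤ i → sigmaSeq S E (i + 1) ⊆ sigmaSeq S E i) ∧
    (∀ i : ℕ, Fintype.card L + 1 ≤ i →
      sigmaSeq S E i = sigmaSeq S E (Fintype.card L + 1)) ∧
    (∀ C ∈ S, (C ∈ lclTrim S E ↔
      ∀ α ∈ C, ∃ β ∈ sigmaSeq S E (Fintype.card L + 1), ({α, β} : Multiset L) ∈ E)) := by
  refine ⟨?_, sq_stable S E, ?_⟩
  · intro i hi
    obtain ⟨m, hm⟩ : ∃ m, i = m + 1 := ⟨i - 1, by omega⟩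
    rw [hm]
    exact sq_step S E m
  · intro C hC
    constructor
    · intro hT α hα
      obtain ⟨τ, he, hc⟩ := hT.2 (Fintype.card L + 2) (by omega) α hα
      have : Fintype.card L + 2 - 1 = Fintype.card L + 1 := rfl
      rw [this] at hc
      exact ⟨τ, (sandwich S E (Fintype.card L)).1 τ hc, he⟩
    · intro h
      refine ⟨hC, fun i hi β hβ => ?_⟩
      obtain ⟨β', hβ', he⟩ := h β hβ
      exact ⟨β', he, star_compat S E (i - 1) β' hβ'⟩
end
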